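/- Let G be a graph and let X be a vertex set such that every component of G[X] (equivalently, of G − N(X) restricted to X) is either a copy of the net graph or a single edge, with s components being nets. Suppose there is a system of distinct representatives assigning to each vertex v ∈ N(X) a distinct component of G[X] adjacent to v. Then opt(G) = opt(G − (X ∪ N(X))) + s + |N(X)|. -/

import Mathlib

open Finset

variable {V : Type*}

def P2verts [DecidableEq V] (p : V × V × V) : Finset V := {p.1, p.2.1, p.2.2}

def IsP2 (G : SimpleGraph V) (p : V × V × V) : Prop :=
  p.1 ≠ p.2.1 ∧ p.1 ≠ p.2.2 ∧ p.2.1 ≠ p.2.2 ∧ G.Adj p.1 p.2.1 ∧ G.Adj p.2.1 p.2.2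

def IsP2Packing [DecidableEq V] (G : SimpleGraph V) (P : Finset (V × V × V)) : Prop :=
  (∀ p ∈ P, IsP2 G p) ∧
    ∀ p ∈ P, ∀ q ∈ P, p ≠ q → Disjoint (P2verts p) (P2verts q)

noncomputable def opt [DecidableEq V] (G : SimpleGraph V) : ℕ :=
  sSup {n | ∃ P : Finset (V × V × V), IsP2Packing G P ∧ P.card = n}

def restrict (G : SimpleGraph V) (S : Set V) : SimpleGraph V where
  Adj a b := G.Adj a b ∧ a ∈ S ∧ b ∈ S
  symm := ⟨fun a b h => ⟨h.1.symm, h.2.2, h.2.1⟩⟩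
  loopless := ⟨fun a h => G.loopless.irrefl a h.1⟩

def nbhd (G : SimpleGraph V) (C : Set V) : Set V :=
  {v | v ∉ C ∧ ∃ c ∈ C, G.Adj v c}

def MaxDegLeOne (G : SimpleGraph V) (C : Set V) : Prop :=
  ∀ v ∈ C, ∀ w ∈ C, ∀ x ∈ C, G.Adj v w → G.Adj v x → w = x

def IsEdgeComp (G : SimpleGraph V) (C : Set V) (x y : V) : Prop :=
  x ∈ C ∧ y ∈ C ∧ x ≠ y ∧ G.Adj x y ∧
    (∀ z ∈ C, G.Adj z x → z = y) ∧ (∀ z ∈ C, G.Adj z y → z = x)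

def IsComp (G : SimpleGraph V) (C : Set V) (s : Set V) : Prop :=
  (∃ x, s = {x} ∧ x ∈ C ∧ ∀ z ∈ C, ¬ G.Adj z x) ∨
  (∃ x y, s = {x, y} ∧ IsEdgeComp G C x y)

/-- `s` induces a copy of the net graph in `G`: six distinct vertices forming a triangle
`x₁ x₂ x₃` with pendants `y₁ y₂ y₃`, and no other edges among them. -/
def IsNetSet (G : SimpleGraph V) (s : Set V) : Prop :=
  ∃ x₁ x₂ x₃ y₁ y₂ y₃ : V,
    List.Pairwise (· ≠ ·) [x₁, x₂, x₃, y₁, y₂, y₃] ∧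
    s = {x₁, x₂, x₃, y₁, y₂, y₃} ∧
    G.Adj x₁ x₂ ∧ G.Adj x₂ x₃ ∧ G.Adj x₁ x₃ ∧
    G.Adj x₁ y₁ ∧ G.Adj x₂ y₂ ∧ G.Adj x₃ y₃ ∧
    ¬ G.Adj x₁ y₂ ∧ ¬ G.Adj x₁ y₃ ∧ ¬ G.Adj x₂ y₁ ∧ ¬ G.Adj x₂ y₃ ∧
    ¬ G.Adj x₃ y₁ ∧ ¬ G.Adj x₃ y₂ ∧ ¬ G.Adj y₁ y₂ ∧ ¬ G.Adj y₁ y₃ ∧ ¬ G.Adj y₂ y₃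

/-- `s` induces a single edge in `G`. -/
def IsEdgeSet (G : SimpleGraph V) (s : Set V) : Prop :=
  ∃ x y : V, x ≠ y ∧ s = {x, y} ∧ G.Adj x y

section AuxLemmas

lemma mem_P2verts [DecidableEq V] {a : V} {p : V × V × V} :
    a ∈ P2verts p ↔ a = p.1 ∨ a = p.2.1 ∨ a = p.2.2 := by
  simp [P2verts]

lemma card_P2verts [DecidableEq V] {G : SimpleGraph V} {p : V × V × V} (hp : IsP2 G p) :
    (P2verts p).card = 3 := by
  obtain ⟨h1, h2, h3, -, -⟩ := hp
  simp [P2verts, Finset.card_insert_of_notMem, h1, h2, h3]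

lemma packing_bdd [Fintype V] [DecidableEq V] (G : SimpleGraph V) :
    BddAbove {n | ∃ P : Finset (V × V × V), IsP2Packing G P ∧ P.card = n} := by
  refine ⟨Fintype.card (V × V × V), ?_⟩
  rintro n ⟨P, _, rfl⟩
  exact Finset.card_le_univ P

lemma card_le_opt [Fintype V] [DecidableEq V] {G : SimpleGraph V} {P : Finset (V × V × V)}
    (h : IsP2Packing G P) : P.card ≤ opt G :=
  le_csSup (packing_bdd G) ⟨P, h, rfl⟩

lemma opt_spec [Fintype V] [DecidableEq V] (G : SimpleGraph V) :
    ∃ P : Finset (V × V × V), IsP2Packing G P ∧ P.card = opt G := by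
  have hne : {n | ∃ P : Finset (V × V × V), IsP2Packing G P ∧ P.card = n}.Nonempty :=
    ⟨0, ∅, ⟨fun p hp => absurd hp (by simp), fun p hp => absurd hp (by simp)⟩, rfl⟩
  exact Nat.sSup_mem hne (packing_bdd G)

lemma restrict_isP2 {S : Set V} {p : V × V × V} {G : SimpleGraph V}
    (h : IsP2 (restrict G S) p) :
    IsP2 G p ∧ p.1 ∈ S ∧ p.2.1 ∈ S ∧ p.2.2 ∈ S := by
  obtain ⟨h1, h2, h3, h4, h5⟩ := h
  exact ⟨⟨h1, h2, h3, h4.1, h5.1⟩, h4.2.1, h4.2.2, h5.2.2⟩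

lemma four_not_in_three [DecidableEq V] {a b c d : V} {p : V × V × V}
    (hab : a ≠ b) (hac : a ≠ c) (had : a ≠ d) (hbc : b ≠ c) (hbd : b ≠ d) (hcd : c ≠ d)
    (ha : a ∈ P2verts p) (hb : b ∈ P2verts p) (hc : c ∈ P2verts p) (hd : d ∈ P2verts p) :
    False := by
  rw [mem_P2verts] at ha hb hc hd
  rcases ha with rfl|rfl|rfl <;> rcases hb with rfl|rfl|rfl <;>
    rcases hc with rfl|rfl|rfl <;> rcases hd with rfl|rfl|rfl <;> simp_all

lemma pendant_mate [DecidableEq V] {G : SimpleGraph V} {C : Set V} {p : V × V × V}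
    (hp : IsP2 G p) (hpC : ↑(P2verts p) ⊆ C) {x y : V}
    (honly : ∀ z ∈ C, G.Adj z y → z = x) (hy : y ∈ P2verts p) : x ∈ P2verts p := by
  obtain ⟨h1, h2, h3, h4, h5⟩ := hp
  have m1 : p.1 ∈ C := hpC (by simp [mem_P2verts])
  have m2 : p.2.1 ∈ C := hpC (by simp [mem_P2verts])
  have m3 : p.2.2 ∈ C := hpC (by simp [mem_P2verts])
  rcases mem_P2verts.mp hy with h | h | h
  · have := honly p.2.1 m2 (h ▸ h4.symm)
    rw [← this]; simp [mem_P2verts]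
  · have := honly p.1 m1 (h ▸ h4)
    rw [← this]; simp [mem_P2verts]
  · have := honly p.2.1 m2 (h ▸ h5)
    rw [← this]; simp [mem_P2verts]

end AuxLemmas

lemma net_no_two_P2 [DecidableEq V] {G : SimpleGraph V} {C : Set V} (hC : IsNetSet G C)
    {p q : V × V × V} (hp : IsP2 G p) (hq : IsP2 G q)
    (hpC : ↑(P2verts p) ⊆ C) (hqC : ↑(P2verts q) ⊆ C)
    (hdisj : Disjoint (P2verts p) (P2verts q)) : False := by
  obtain ⟨x₁, x₂, x₃, y₁, y₂, y₃, hpair, hset, a12, a23, a13, b1, b2, b3,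
    n12, n13, n21, n23, n31, n32, m12, m13, m23⟩ := hC
  simp only [List.pairwise_cons, List.mem_cons, List.not_mem_nil, or_false,
    List.mem_singleton, List.Pairwise.nil, and_true] at hpair
  obtain ⟨hne1, hne2, hne3, hne4, hne5⟩ := hpair
  have d12 := hne1 x₂ (by tauto)
  have d13 := hne1 x₃ (by tauto)
  have d1y1 := hne1 y₁ (by tauto)
  have d1y2 := hne1 y₂ (by tauto)
  have d1y3 := hne1 y₃ (by tauto)
  have d23 := hne2 x₃ (by tauto)
  have d2y1 := hne2 y₁ (by tauto)
  have d2y2 := hne2 y₂ (by tauto)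
  have d2y3 := hne2 y₃ (by tauto)
  have d3y1 := hne3 y₁ (by tauto)
  have d3y2 := hne3 y₂ (by tauto)
  have d3y3 := hne3 y₃ (by tauto)
  have dy12 := hne4 y₂ (by tauto)
  have dy13 := hne4 y₃ (by tauto)
  have dy23 := hne5.1 y₃ rfl
  have hmemC : ∀ z ∈ C, z = x₁ ∨ z = x₂ ∨ z = x₃ ∨ z = y₁ ∨ z = y₂ ∨ z = y₃ := by
    intro z hz; rw [hset] at hz; simpa using hz
  have only1 : ∀ z ∈ C, G.Adj z y₁ → z = x₁ := by
    intro z hz hadj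
    rcases hmemC z hz with rfl|rfl|rfl|rfl|rfl|rfl
    · rfl
    · exact absurd hadj n21
    · exact absurd hadj n31
    · exact absurd hadj (G.loopless.irrefl _)
    · exact absurd hadj.symm m12
    · exact absurd hadj.symm m13
  have only2 : ∀ z ∈ C, G.Adj z y₂ → z = x₂ := by
    intro z hz hadj
    rcases hmemC z hz with rfl|rfl|rfl|rfl|rfl|rfl
    · exact absurd hadj n12
    · rfl
    · exact absurd hadj n32
    · exact absurd hadj m12
    · exact absurd hadj (G.loopless.irrefl _)
    · exact absurd hadj.symm m23
  have only3 : ∀ z ∈ C, G.Adj z y₃ → z = x₃ := by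
    intro z hz hadj
    rcases hmemC z hz with rfl|rfl|rfl|rfl|rfl|rfl
    · exact absurd hadj n13
    · exact absurd hadj n23
    · rfl
    · exact absurd hadj m13
    · exact absurd hadj m23
    · exact absurd hadj (G.loopless.irrefl _)
  -- at most one pendant per P2
  have onepend : ∀ r : V × V × V, IsP2 G r → ↑(P2verts r) ⊆ C →
      ¬((y₁ ∈ P2verts r ∧ y₂ ∈ P2verts r) ∨ (y₁ ∈ P2verts r ∧ y₃ ∈ P2verts r) ∨
        (y₂ ∈ P2verts r ∧ y₃ ∈ P2verts r)) := by
    rintro r hr hrC (⟨ha, hb⟩ | ⟨ha, hb⟩ | ⟨ha, hb⟩)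
    · exact four_not_in_three d12 d1y1 d1y2 d2y1 d2y2 dy12
        (pendant_mate hr hrC only1 ha) (pendant_mate hr hrC only2 hb) ha hb
    · exact four_not_in_three d13 d1y1 d1y3 d3y1 d3y3 dy13
        (pendant_mate hr hrC only1 ha) (pendant_mate hr hrC only3 hb) ha hb
    · exact four_not_in_three d23 d2y2 d2y3 d3y2 d3y3 dy23
        (pendant_mate hr hrC only2 ha) (pendant_mate hr hrC only3 hb) ha hb
  -- union of verts equals the whole net
  have hFcard : ({x₁, x₂, x₃, y₁, y₂, y₃} : Finset V).card = 6 := by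
    rw [card_insert_of_notMem (by simp [d12, d13, d1y1, d1y2, d1y3]),
      card_insert_of_notMem (by simp [d23, d2y1, d2y2, d2y3]),
      card_insert_of_notMem (by simp [d3y1, d3y2, d3y3]),
      card_insert_of_notMem (by simp [dy12, dy13]),
      card_insert_of_notMem (by simp [dy23]), card_singleton]
  have hsubF : P2verts p ∪ P2verts q ⊆ ({x₁, x₂, x₃, y₁, y₂, y₃} : Finset V) := by
    intro z hz
    have hzC : z ∈ C := by
      rcases Finset.mem_union.mp hz with h | h
      · exact hpC h
      · exact hqC h
    rw [hset] at hzC; simpa using hzC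
  have hcards : (P2verts p ∪ P2verts q).card = 6 := by
    rw [Finset.card_union_of_disjoint hdisj, card_P2verts hp, card_P2verts hq]
  have hequ : ({x₁, x₂, x₃, y₁, y₂, y₃} : Finset V) = P2verts p ∪ P2verts q :=
    (Finset.eq_of_subset_of_card_le hsubF (by rw [hFcard, hcards])).symm
  have hy1 : y₁ ∈ P2verts p ∪ P2verts q := by rw [← hequ]; simp
  have hy2 : y₂ ∈ P2verts p ∪ P2verts q := by rw [← hequ]; simp
  have hy3 : y₃ ∈ P2verts p ∪ P2verts q := by rw [← hequ]; simp
  rw [Finset.mem_union] at hy1 hy2 hy3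
  rcases hy1 with h1 | h1 <;> rcases hy2 with h2 | h2 <;> rcases hy3 with h3 | h3
  · exact onepend p hp hpC (Or.inl ⟨h1, h2⟩)
  · exact onepend p hp hpC (Or.inl ⟨h1, h2⟩)
  · exact onepend p hp hpC (Or.inr (Or.inl ⟨h1, h3⟩))
  · exact onepend q hq hqC (Or.inr (Or.inr ⟨h2, h3⟩))
  · exact onepend p hp hpC (Or.inr (Or.inr ⟨h2, h3⟩))
  · exact onepend q hq hqC (Or.inr (Or.inl ⟨h1, h3⟩))
  · exact onepend q hq hqC (Or.inl ⟨h1, h2⟩)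
  · exact onepend q hq hqC (Or.inl ⟨h1, h2⟩)

lemma edge_no_P2 [DecidableEq V] {G : SimpleGraph V} {C : Set V} (hC : IsEdgeSet G C)
    {p : V × V × V} (hp : IsP2 G p) (hpC : ↑(P2verts p) ⊆ C) : False := by
  obtain ⟨x, y, hxy, hset, -⟩ := hC
  obtain ⟨h1, h2, h3, -, -⟩ := hp
  have m1 : p.1 ∈ C := hpC (by simp [mem_P2verts])
  have m2 : p.2.1 ∈ C := hpC (by simp [mem_P2verts])
  have m3 : p.2.2 ∈ C := hpC (by simp [mem_P2verts])
  rw [hset] at m1 m2 m3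
  simp only [Set.mem_insert_iff, Set.mem_singleton_iff] at m1 m2 m3
  rcases m1 with rfl | rfl <;> rcases m2 with h | h <;> rcases m3 with h' | h' <;> simp_all

lemma net_single [DecidableEq V] {G : SimpleGraph V} {C : Set V} (hC : IsNetSet G C) :
    ∃ q : V × V × V, IsP2 G q ∧ ↑(P2verts q) ⊆ C := by
  obtain ⟨x₁, x₂, x₃, y₁, y₂, y₃, hpair, hset, a12, a23, a13, b1, b2, b3, -⟩ := hC
  simp only [List.pairwise_cons, List.mem_cons, List.not_mem_nil, or_false,
    List.mem_singleton, List.Pairwise.nil, and_true] at hpair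
  obtain ⟨hne1, hne2, hne3, hne4, hne5⟩ := hpair
  refine ⟨(y₁, x₁, x₂), ⟨(hne1 y₁ (by tauto)).symm, (hne2 y₁ (by tauto)).symm,
    hne1 x₂ (by tauto), b1.symm, a12⟩, ?_⟩
  intro z hz
  rw [hset]
  simp only [Finset.coe_insert, Finset.coe_singleton, Set.mem_insert_iff] at hz ⊢
  rcases mem_P2verts.mp hz with rfl | rfl | rfl <;> simp

set_option maxHeartbeats 1000000 in
lemma net_build [DecidableEq V] {G : SimpleGraph V} {C : Set V} (hC : IsNetSet G C)
    {v c : V} (hv : v ∉ C) (hc : c ∈ C) (hadj : G.Adj v c) :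
    ∃ p q : V × V × V, IsP2 G p ∧ IsP2 G q ∧ v ∈ P2verts p ∧
      ↑(P2verts p) ⊆ insert v C ∧ ↑(P2verts q) ⊆ C ∧ Disjoint (P2verts p) (P2verts q) := by
  obtain ⟨x₁, x₂, x₃, y₁, y₂, y₃, hpair, hset, a12, a23, a13, b1, b2, b3,
    n12, n13, n21, n23, n31, n32, m12, m13, m23⟩ := hC
  simp only [List.pairwise_cons, List.mem_cons, List.not_mem_nil, or_false,
    List.mem_singleton, List.Pairwise.nil, and_true] at hpair
  obtain ⟨hne1, hne2, hne3, hne4, hne5⟩ := hpair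
  have d12 := hne1 x₂ (by tauto)
  have d13 := hne1 x₃ (by tauto)
  have d1y1 := hne1 y₁ (by tauto)
  have d1y2 := hne1 y₂ (by tauto)
  have d1y3 := hne1 y₃ (by tauto)
  have d23 := hne2 x₃ (by tauto)
  have d2y1 := hne2 y₁ (by tauto)
  have d2y2 := hne2 y₂ (by tauto)
  have d2y3 := hne2 y₃ (by tauto)
  have d3y1 := hne3 y₁ (by tauto)
  have d3y2 := hne3 y₂ (by tauto)
  have d3y3 := hne3 y₃ (by tauto)
  have dy12 := hne4 y₂ (by tauto)
  have dy13 := hne4 y₃ (by tauto)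
  have dy23 := hne5.1 y₃ rfl
  have hvx1 : v ≠ x₁ := fun h => hv (by rw [hset, h]; simp)
  have hvx2 : v ≠ x₂ := fun h => hv (by rw [hset, h]; simp)
  have hvx3 : v ≠ x₃ := fun h => hv (by rw [hset, h]; simp)
  have hvy1 : v ≠ y₁ := fun h => hv (by rw [hset, h]; simp)
  have hvy2 : v ≠ y₂ := fun h => hv (by rw [hset, h]; simp)
  have hvy3 : v ≠ y₃ := fun h => hv (by rw [hset, h]; simp)
  have hcC : c = x₁ ∨ c = x₂ ∨ c = x₃ ∨ c = y₁ ∨ c = y₂ ∨ c = y₃ := by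
    rw [hset] at hc; simpa using hc
  have mx1 : x₁ ∈ C := by rw [hset]; simp
  have mx2 : x₂ ∈ C := by rw [hset]; simp
  have mx3 : x₃ ∈ C := by rw [hset]; simp
  have my1 : y₁ ∈ C := by rw [hset]; simp
  have my2 : y₂ ∈ C := by rw [hset]; simp
  have my3 : y₃ ∈ C := by rw [hset]; simp
  have hsub : ∀ a b d : V, a ∈ C → b ∈ C → d ∈ C → (↑(P2verts (a, b, d)) : Set V) ⊆ C := by
    intro a b d ha hb hd z hz
    rcases mem_P2verts.mp hz with rfl | rfl | rfl <;> assumption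
  have hmem : ∀ z : V, z = x₁ ∨ z = x₂ ∨ z = x₃ ∨ z = y₁ ∨ z = y₂ ∨ z = y₃ → z ∈ C := by
    intro z hz; rw [hset]; rcases hz with rfl|rfl|rfl|rfl|rfl|rfl <;> simp
  have hsubp : ∀ b d : V, b ∈ C → d ∈ C → (↑(P2verts (v, b, d)) : Set V) ⊆ insert v C := by
    intro b d hb hd z hz
    rcases mem_P2verts.mp hz with rfl | rfl | rfl
    · exact Set.mem_insert _ _
    · exact Set.mem_insert_of_mem _ hb
    · exact Set.mem_insert_of_mem _ hd
  have hvmem : ∀ b d : V, v ∈ P2verts (v, b, d) := by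
    intro b d; simp [mem_P2verts]
  have hdj : ∀ p q : V × V × V,
      (p.1 ≠ q.1 ∧ p.1 ≠ q.2.1 ∧ p.1 ≠ q.2.2 ∧ p.2.1 ≠ q.1 ∧ p.2.1 ≠ q.2.1 ∧ p.2.1 ≠ q.2.2 ∧
       p.2.2 ≠ q.1 ∧ p.2.2 ≠ q.2.1 ∧ p.2.2 ≠ q.2.2) → Disjoint (P2verts p) (P2verts q) := by
    intro p q h
    obtain ⟨h1, h2, h3, h4, h5, h6, h7, h8, h9⟩ := h
    simp [P2verts, Finset.disjoint_insert_left, Finset.disjoint_insert_right,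
      Finset.disjoint_singleton, h1, h2, h3, h4, h5, h6, h7, h8, h9]
    exact ⟨⟨h1.symm, h4.symm, h7.symm⟩, ⟨h2.symm, h5.symm, h8.symm⟩, h3.symm, h6.symm, h9.symm⟩
  rcases hcC with rfl | rfl | rfl | rfl | rfl | rfl
  · -- c = x₁
    refine ⟨(v, c, y₁), (y₂, x₂, x₃), ⟨hvx1, hvy1, d1y1, hadj, b1⟩,
      ⟨(d2y2).symm, (d3y2).symm, d23, b2.symm, a23⟩, hvmem _ _,
      hsubp _ _ (by assumption) (by assumption),
      hsub _ _ _ (by assumption) (by assumption) (by assumption),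
      hdj _ _ ⟨hvy2, hvx2, hvx3, d1y2.symm.symm, d12, d13, dy12, d2y1.symm, d3y1.symm⟩⟩
  · -- c = x₂
    refine ⟨(v, c, y₂), (y₁, x₁, x₃), ⟨hvx2, hvy2, d2y2, hadj, b2⟩,
      ⟨(d1y1).symm, (d3y1).symm, d13, b1.symm, a13⟩, hvmem _ _,
      hsubp _ _ (by assumption) (by assumption),
      hsub _ _ _ (by assumption) (by assumption) (by assumption),
      hdj _ _ ⟨hvy1, hvx1, hvx3, d2y1.symm.symm, d12.symm, d23, dy12.symm, d1y2.symm, d3y2.symm⟩⟩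
  · -- c = x₃
    refine ⟨(v, c, y₃), (y₁, x₁, x₂), ⟨hvx3, hvy3, d3y3, hadj, b3⟩,
      ⟨(d1y1).symm, (d2y1).symm, d12, b1.symm, a12⟩, hvmem _ _,
      hsubp _ _ (by assumption) (by assumption),
      hsub _ _ _ (by assumption) (by assumption) (by assumption),
      hdj _ _ ⟨hvy1, hvx1, hvx2, d3y1.symm.symm, d13.symm, d23.symm, dy13.symm, d1y3.symm, d2y3.symm⟩⟩
  · -- c = y₁
    refine ⟨(v, c, x₁), (y₂, x₂, x₃), ⟨hvy1, hvx1, d1y1.symm, hadj, b1.symm⟩,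
      ⟨(d2y2).symm, (d3y2).symm, d23, b2.symm, a23⟩, hvmem _ _,
      hsubp _ _ (by assumption) (by assumption),
      hsub _ _ _ (by assumption) (by assumption) (by assumption),
      hdj _ _ ⟨hvy2, hvx2, hvx3, dy12, d2y1.symm, d3y1.symm, d1y2.symm.symm, d12, d13⟩⟩
  · -- c = y₂
    refine ⟨(v, c, x₂), (y₁, x₁, x₃), ⟨hvy2, hvx2, d2y2.symm, hadj, b2.symm⟩,
      ⟨(d1y1).symm, (d3y1).symm, d13, b1.symm, a13⟩, hvmem _ _,
      hsubp _ _ (by assumption) (by assumption),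
      hsub _ _ _ (by assumption) (by assumption) (by assumption),
      hdj _ _ ⟨hvy1, hvx1, hvx3, dy12.symm, d1y2.symm, d3y2.symm, d2y1.symm.symm, d12.symm, d23⟩⟩
  · -- c = y₃
    refine ⟨(v, c, x₃), (y₁, x₁, x₂), ⟨hvy3, hvx3, d3y3.symm, hadj, b3.symm⟩,
      ⟨(d1y1).symm, (d2y1).symm, d12, b1.symm, a12⟩, hvmem _ _,
      hsubp _ _ (by assumption) (by assumption),
      hsub _ _ _ (by assumption) (by assumption) (by assumption),
      hdj _ _ ⟨hvy1, hvx1, hvx2, dy13.symm, d1y3.symm, d2y3.symm, d3y1.symm.symm, d13.symm, d23.symm⟩⟩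

lemma edge_build [DecidableEq V] {G : SimpleGraph V} {C : Set V} (hC : IsEdgeSet G C)
    {v c : V} (hv : v ∉ C) (hc : c ∈ C) (hadj : G.Adj v c) :
    ∃ p : V × V × V, IsP2 G p ∧ v ∈ P2verts p ∧ ↑(P2verts p) ⊆ insert v C := by
  obtain ⟨x, y, hxy, hset, hexy⟩ := hC
  have hvx : v ≠ x := fun h => hv (by rw [hset, h]; simp)
  have hvy : v ≠ y := fun h => hv (by rw [hset, h]; simp)
  have hmx : x ∈ C := by rw [hset]; simp
  have hmy : y ∈ C := by rw [hset]; simp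
  have hcC : c = x ∨ c = y := by rw [hset] at hc; simpa using hc
  rcases hcC with rfl | rfl
  · exact ⟨(v, c, y), ⟨hvx, hvy, hxy, hadj, hexy⟩, by simp [mem_P2verts], by
      intro z hz
      rcases mem_P2verts.mp hz with rfl | rfl | rfl
      · exact Set.mem_insert _ _
      · exact Set.mem_insert_of_mem _ hmx
      · exact Set.mem_insert_of_mem _ hmy⟩
  · exact ⟨(v, c, x), ⟨hvy, hvx, hxy.symm, hadj, hexy.symm⟩, by simp [mem_P2verts], by
      intro z hz
      rcases mem_P2verts.mp hz with rfl | rfl | rfl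
      · exact Set.mem_insert _ _
      · exact Set.mem_insert_of_mem _ hmy
      · exact Set.mem_insert_of_mem _ hmx⟩

theorem net_crown_reduction {V : Type*} [Fintype V] [DecidableEq V]
    (G : SimpleGraph V) (X : Set V)
    (ι : Type*) [Fintype ι] (comps : ι → Set V)
    -- the `comps i` are the components of `G[X]`:
    (hsub : ∀ i, comps i ⊆ X)
    (hcover : X = ⋃ i, comps i)
    (hdisj : ∀ i j, i ≠ j → Disjoint (comps i) (comps j))
    (hnocross : ∀ i j, i ≠ j → ∀ x ∈ comps i, ∀ y ∈ comps j, ¬ G.Adj x y)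
    -- each component is a copy of the net graph or a single edge:
    (htype : ∀ i, IsNetSet G (comps i) ∨ IsEdgeSet G (comps i))
    -- `s` is the number of net components:
    (s : ℕ) (hs : Nat.card {i : ι // IsNetSet G (comps i)} = s)
    -- system of distinct representatives: each `v ∈ N(X)` gets its own adjacent component:
    (rep : V → ι) (hrepinj : Set.InjOn rep (nbhd G X))
    (hrep : ∀ v ∈ nbhd G X, ∃ w ∈ comps (rep v), G.Adj v w) :
    opt G = opt (restrict G ((X ∪ nbhd G X)ᶜ)) + s + (nbhd G X).ncard := by
  classical
  set S : Set V := (X ∪ nbhd G X)ᶜ with hS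
  set NX := nbhd G X with hNX
  have hfin : NX.Finite := Set.toFinite _
  set NF := hfin.toFinset with hNF
  set NetF := Finset.univ.filter (fun i => IsNetSet G (comps i)) with hNetF
  have hNFc : NF.card = NX.ncard := (Set.ncard_eq_toFinset_card _ hfin).symm
  have hNetFc : NetF.card = s := by
    rw [← hs, Nat.card_eq_fintype_card, Fintype.card_subtype]
  have upper : opt G ≤ opt (restrict G S) + s + NX.ncard := by
    obtain ⟨P, hP, hPcard⟩ := opt_spec G
    letI I1 : DecidablePred (fun p : V × V × V => ∃ a, a ∈ P2verts p ∧ a ∈ NX) :=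
      fun _ => Classical.propDecidable _
    letI I2 : DecidablePred (fun p : V × V × V =>
        (∀ a, a ∈ P2verts p → a ∉ NX) ∧ ∃ a, a ∈ P2verts p ∧ a ∈ X) :=
      fun _ => Classical.propDecidable _
    letI I3 : DecidablePred (fun p : V × V × V => ∀ a, a ∈ P2verts p → a ∈ S) :=
      fun _ => Classical.propDecidable _
    set P1 := P.filter (fun p => ∃ a, a ∈ P2verts p ∧ a ∈ NX) with hP1
    set P2 := P.filter (fun p => (∀ a, a ∈ P2verts p → a ∉ NX) ∧ ∃ a, a ∈ P2verts p ∧ a ∈ X) with hP2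
    set P3 := P.filter (fun p => ∀ a, a ∈ P2verts p → a ∈ S) with hP3
    have hcov : P ⊆ P1 ∪ P2 ∪ P3 := by
      intro p hp
      simp only [Finset.mem_union, hP1, hP2, hP3, Finset.mem_filter]
      by_cases h1 : ∃ a, a ∈ P2verts p ∧ a ∈ NX
      · exact Or.inl (Or.inl ⟨hp, h1⟩)
      by_cases h2 : ∃ a, a ∈ P2verts p ∧ a ∈ X
      · exact Or.inl (Or.inr ⟨hp, fun a ha hna => h1 ⟨a, ha, hna⟩, h2⟩)
      · refine Or.inr ⟨hp, fun a ha => ?_⟩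
        rw [hS]
        intro hmem
        rcases hmem with hx | hn
        · exact h2 ⟨a, ha, hx⟩
        · exact h1 ⟨a, ha, hn⟩
    have hc1 : P1.card ≤ NF.card := by
      have hchoice : ∀ (p : V × V × V), p ∈ P1 → ∃ a, a ∈ P2verts p ∧ a ∈ NX := by
        intro p hp
        obtain ⟨-, a, ha, haN⟩ := Finset.mem_filter.mp hp
        exact ⟨a, ha, haN⟩
      choose f hf1 hf2 using hchoice
      have hle : P1.attach.card ≤ NF.card := by
        refine Finset.card_le_card_of_injOn (fun x => f x.1 x.2) ?_ ?_
        · intro x _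
          rw [hNF, Finset.mem_coe, Set.Finite.mem_toFinset]
          exact hf2 x.1 x.2
        · intro x _ y _ hfq
          by_contra hne
          have hne' : x.1 ≠ y.1 := fun h => hne (Subtype.ext h)
          have hd := hP.2 x.1 (Finset.mem_filter.mp x.2).1 y.1 (Finset.mem_filter.mp y.2).1 hne'
          have hfq' : f x.1 x.2 = f y.1 y.2 := hfq
          have hcq : f x.1 x.2 ∈ P2verts y.1 := by rw [hfq']; exact hf1 y.1 y.2
          exact Finset.disjoint_left.mp hd (hf1 x.1 x.2) hcq
      rwa [Finset.card_attach] at hle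
    have hsame : ∀ p ∈ P2, ∃ i, IsNetSet G (comps i) ∧ ↑(P2verts p) ⊆ comps i := by
      intro p hp
      obtain ⟨hpP, hno, a, ha, haX⟩ := Finset.mem_filter.mp hp
      obtain ⟨h1, h2, h3, h4, h5⟩ := hP.1 p hpP
      have step : ∀ a b : V, G.Adj a b → a ∈ X → b ∈ P2verts p → b ∈ X := by
        intro a b hab hamem hb
        by_contra hbX
        exact hno b hb ⟨hbX, a, hamem, hab.symm⟩
      have hall : p.1 ∈ X ∧ p.2.1 ∈ X ∧ p.2.2 ∈ X := by
        rcases mem_P2verts.mp ha with rfl | rfl | rfl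
        · have hm : p.2.1 ∈ X := step _ _ h4 haX (by simp [mem_P2verts])
          exact ⟨haX, hm, step _ _ h5 hm (by simp [mem_P2verts])⟩
        · exact ⟨step _ _ h4.symm haX (by simp [mem_P2verts]), haX,
            step _ _ h5 haX (by simp [mem_P2verts])⟩
        · have hm : p.2.1 ∈ X := step _ _ h5.symm haX (by simp [mem_P2verts])
          exact ⟨step _ _ h4.symm hm (by simp [mem_P2verts]), hm, haX⟩
      obtain ⟨hx1, hx2, hx3⟩ := hall
      rw [hcover] at hx1 hx2 hx3
      obtain ⟨i, hi⟩ := Set.mem_iUnion.mp hx1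
      obtain ⟨j, hj⟩ := Set.mem_iUnion.mp hx2
      obtain ⟨k, hk⟩ := Set.mem_iUnion.mp hx3
      obtain rfl : i = j := by
        by_contra hne; exact hnocross i j hne _ hi _ hj h4
      obtain rfl : i = k := by
        by_contra hne; exact hnocross i k hne _ hj _ hk h5
      have hsubp : ↑(P2verts p) ⊆ comps i := by
        intro z hz
        rcases mem_P2verts.mp hz with rfl | rfl | rfl <;> assumption
      rcases htype i with hnet | hedge
      · exact ⟨i, hnet, hsubp⟩
      · exact (edge_no_P2 hedge ⟨h1, h2, h3, h4, h5⟩ hsubp).elim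
    have hc2 : P2.card ≤ NetF.card := by
      choose f hf1 hf2 using hsame
      have hle : P2.attach.card ≤ NetF.card := by
        refine Finset.card_le_card_of_injOn (fun x => f x.1 x.2) ?_ ?_
        · intro x _
          rw [hNetF, Finset.mem_coe, Finset.mem_filter]
          exact ⟨Finset.mem_univ _, hf1 x.1 x.2⟩
        · intro x _ y _ hfq
          by_contra hne
          have hne' : x.1 ≠ y.1 := fun h => hne (Subtype.ext h)
          have hd := hP.2 x.1 (Finset.mem_filter.mp x.2).1 y.1 (Finset.mem_filter.mp y.2).1 hne'
          have hfq' : f x.1 x.2 = f y.1 y.2 := hfq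
          have hq2 : ↑(P2verts y.1) ⊆ comps (f x.1 x.2) := by
            rw [hfq']; exact hf2 y.1 y.2
          exact net_no_two_P2 (hf1 x.1 x.2) (hP.1 x.1 (Finset.mem_filter.mp x.2).1)
            (hP.1 y.1 (Finset.mem_filter.mp y.2).1) (hf2 x.1 x.2) hq2 hd
      rwa [Finset.card_attach] at hle
    have hc3 : P3.card ≤ opt (restrict G S) := by
      refine card_le_opt ⟨?_, ?_⟩
      · intro p hp
        obtain ⟨hpP, hall⟩ := Finset.mem_filter.mp hp
        obtain ⟨h1, h2, h3, h4, h5⟩ := hP.1 p hpP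
        exact ⟨h1, h2, h3,
          ⟨h4, hall _ (by simp [mem_P2verts]), hall _ (by simp [mem_P2verts])⟩,
          ⟨h5, hall _ (by simp [mem_P2verts]), hall _ (by simp [mem_P2verts])⟩⟩
      · intro p hp q hq hne
        exact hP.2 p (Finset.mem_filter.mp hp).1 q (Finset.mem_filter.mp hq).1 hne
    calc opt G = P.card := hPcard.symm
      _ ≤ (P1 ∪ P2 ∪ P3).card := Finset.card_le_card hcov
      _ ≤ (P1 ∪ P2).card + P3.card := Finset.card_union_le _ _
      _ ≤ P1.card + P2.card + P3.card := by
          have := Finset.card_union_le P1 P2; omega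
      _ ≤ NF.card + NetF.card + opt (restrict G S) := by
          have := hc1; have := hc2; have := hc3; omega
      _ = opt (restrict G S) + s + NX.ncard := by rw [hNFc, hNetFc]; omega
  have lower : opt (restrict G S) + s + NX.ncard ≤ opt G := by
    obtain ⟨P', hP', hPcard'⟩ := opt_spec (restrict G S)
    have hnotX : ∀ v ∈ NX, v ∉ X := fun v hv => hv.1
    have hchoice : ∀ v, v ∈ NX → ∃ p q : V × V × V,
        IsP2 G p ∧ v ∈ P2verts p ∧ ↑(P2verts p) ⊆ insert v (comps (rep v)) ∧
        (IsNetSet G (comps (rep v)) → IsP2 G q ∧ ↑(P2verts q) ⊆ comps (rep v) ∧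
          Disjoint (P2verts p) (P2verts q)) := by
      intro v hv
      obtain ⟨c, hcm, hadj⟩ := hrep v hv
      have hvnot : v ∉ comps (rep v) := fun h => hnotX v hv (hsub _ h)
      rcases htype (rep v) with hnet | hedge
      · obtain ⟨p, q, hp, hq, hvm, hps, hqs, hdq⟩ := net_build hnet hvnot hcm hadj
        exact ⟨p, q, hp, hvm, hps, fun _ => ⟨hq, hqs, hdq⟩⟩
      · obtain ⟨p, hp, hvm, hps⟩ := edge_build hedge hvnot hcm hadj
        refine ⟨p, p, hp, hvm, hps, fun hnet => ?_⟩
        obtain ⟨q0, hq0, hq0s⟩ := net_single hnet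
        exact (edge_no_P2 hedge hq0 hq0s).elim
    choose pf qf hpf1 hpf2 hpf3 hpf4 using hchoice
    have hqchoice : ∀ i : ι, IsNetSet G (comps i) → ∃ q : V × V × V,
        IsP2 G q ∧ ↑(P2verts q) ⊆ comps i ∧
        ∀ v, ∀ hv : v ∈ NX, rep v = i → Disjoint (P2verts (pf v hv)) (P2verts q) := by
      intro i hi
      by_cases h : ∃ v, ∃ hv : v ∈ NX, rep v = i
      · obtain ⟨v, hv, hrv⟩ := h
        have hi' : IsNetSet G (comps (rep v)) := by rw [hrv]; exact hi
        obtain ⟨hq, hqs, hdq⟩ := hpf4 v hv hi'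
        refine ⟨qf v hv, hq, by rw [← hrv]; exact hqs, ?_⟩
        intro v' hv' hrv'
        obtain rfl : v' = v := hrepinj hv' hv (by rw [hrv', hrv])
        exact hdq
      · obtain ⟨q, hq1, hq2⟩ := net_single hi
        exact ⟨q, hq1, hq2, fun v hv hrv => absurd ⟨v, hv, hrv⟩ h⟩
    choose qg hqg1 hqg2 hqg3 using hqchoice
    set A := NF.attach.image (fun x => pf x.1 (hfin.mem_toFinset.mp x.2)) with hA
    set B := NetF.attach.image (fun x => qg x.1 (by exact (Finset.mem_filter.mp x.2).2)) with hB
    have hpfsub : ∀ v, ∀ hv : v ∈ NX, ↑(P2verts (pf v hv)) ⊆ X ∪ NX := by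
      intro v hv z hz
      rcases Set.mem_insert_iff.mp (hpf3 v hv hz) with rfl | hzc
      · exact Or.inr hv
      · exact Or.inl (hsub _ hzc)
    have hqgsub : ∀ i, ∀ hi : IsNetSet G (comps i), ↑(P2verts (qg i hi)) ⊆ X ∪ NX :=
      fun i hi z hz => Or.inl (hsub _ (hqg2 i hi hz))
    have hABsub : ∀ a ∈ A ∪ B, ↑(P2verts a) ⊆ X ∪ NX := by
      intro a ha
      rcases Finset.mem_union.mp ha with h | h
      · obtain ⟨x, -, rfl⟩ := Finset.mem_image.mp h; exact hpfsub _ _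
      · obtain ⟨x, -, rfl⟩ := Finset.mem_image.mp h; exact hqgsub _ _
    have hP'S : ∀ p ∈ P', ∀ z ∈ P2verts p, z ∈ S := by
      intro p hp z hz
      obtain ⟨hip, m1, m2, m3⟩ := restrict_isP2 (hP'.1 p hp)
      rcases mem_P2verts.mp hz with rfl | rfl | rfl <;> assumption
    have hdisjP'AB : ∀ p ∈ P', ∀ a ∈ A ∪ B, Disjoint (P2verts p) (P2verts a) := by
      intro p hp a ha
      rw [Finset.disjoint_left]
      intro z hzp hza
      exact hP'S p hp z hzp (hABsub a ha (Finset.mem_coe.mpr hza))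
    have hne_of_disj : ∀ p q : V × V × V, Disjoint (P2verts p) (P2verts q) → p ≠ q := by
      intro p q h heq
      rw [heq] at h
      have hm : q.1 ∈ P2verts q := by simp [mem_P2verts]
      exact Finset.disjoint_left.mp h hm hm
    have hP'notAB : Disjoint P' (A ∪ B) := by
      rw [Finset.disjoint_left]
      intro p hp hpAB
      exact hne_of_disj p p (hdisjP'AB p hp p hpAB) rfl
    have hAA : ∀ v, ∀ hv : v ∈ NX, ∀ v', ∀ hv' : v' ∈ NX, v ≠ v' →
        Disjoint (P2verts (pf v hv)) (P2verts (pf v' hv')) := by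
      intro v hv v' hv' hne
      rw [Finset.disjoint_left]
      intro z hz hz'
      have hrne : rep v ≠ rep v' := fun h => hne (hrepinj hv hv' h)
      rcases Set.mem_insert_iff.mp (hpf3 v hv hz) with rfl | h1
      · rcases Set.mem_insert_iff.mp (hpf3 v' hv' hz') with h | h2
        · exact hne h
        · exact hnotX _ hv (hsub _ h2)
      · rcases Set.mem_insert_iff.mp (hpf3 v' hv' hz') with rfl | h2
        · exact hnotX _ hv' (hsub _ h1)
        · exact Set.disjoint_left.mp (hdisj _ _ hrne) h1 h2
    have hBB : ∀ i, ∀ hi : IsNetSet G (comps i), ∀ j, ∀ hj : IsNetSet G (comps j), i ≠ j →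
        Disjoint (P2verts (qg i hi)) (P2verts (qg j hj)) := by
      intro i hi j hj hne
      rw [Finset.disjoint_left]
      intro z hz hz'
      exact Set.disjoint_left.mp (hdisj _ _ hne) (hqg2 i hi hz) (hqg2 j hj hz')
    have hABd : ∀ v, ∀ hv : v ∈ NX, ∀ i, ∀ hi : IsNetSet G (comps i),
        Disjoint (P2verts (pf v hv)) (P2verts (qg i hi)) := by
      intro v hv i hi
      by_cases hri : rep v = i
      · exact hqg3 i hi v hv hri
      · rw [Finset.disjoint_left]
        intro z hz hz'
        have h2 := hqg2 i hi (Finset.mem_coe.mpr hz')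
        rcases Set.mem_insert_iff.mp (hpf3 v hv hz) with rfl | h1
        · exact hnotX _ hv (hsub _ h2)
        · exact Set.disjoint_left.mp (hdisj _ _ hri) h1 h2
    have hQpack : IsP2Packing G (P' ∪ (A ∪ B)) := by
      constructor
      · intro p hp
        rcases Finset.mem_union.mp hp with h | h
        · exact (restrict_isP2 (hP'.1 p h)).1
        rcases Finset.mem_union.mp h with h | h
        · obtain ⟨x, -, rfl⟩ := Finset.mem_image.mp h; exact hpf1 _ _
        · obtain ⟨x, -, rfl⟩ := Finset.mem_image.mp h; exact hqg1 _ _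
      · intro p hp q hq hnepq
        rcases Finset.mem_union.mp hp with h | h
        · rcases Finset.mem_union.mp hq with h' | h'
          · exact hP'.2 p h q h' hnepq
          · exact hdisjP'AB p h q h'
        · rcases Finset.mem_union.mp hq with h' | h'
          · exact (hdisjP'AB q h' p h).symm
          · rcases Finset.mem_union.mp h with ha | hb <;>
              rcases Finset.mem_union.mp h' with ha' | hb'
            · obtain ⟨x, -, rfl⟩ := Finset.mem_image.mp ha
              obtain ⟨y, -, rfl⟩ := Finset.mem_image.mp ha'
              refine hAA _ _ _ _ fun he => hnepq ?_
              have : x = y := Subtype.ext he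
              rw [this]
            · obtain ⟨x, -, rfl⟩ := Finset.mem_image.mp ha
              obtain ⟨y, -, rfl⟩ := Finset.mem_image.mp hb'
              exact hABd _ _ _ _
            · obtain ⟨x, -, rfl⟩ := Finset.mem_image.mp hb
              obtain ⟨y, -, rfl⟩ := Finset.mem_image.mp ha'
              exact (hABd _ _ _ _).symm
            · obtain ⟨x, -, rfl⟩ := Finset.mem_image.mp hb
              obtain ⟨y, -, rfl⟩ := Finset.mem_image.mp hb'
              refine hBB _ _ _ _ fun he => hnepq ?_
              have : x = y := Subtype.ext he
              rw [this]
    have hAcard : A.card = NF.card := by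
      rw [hA, Finset.card_image_of_injOn, Finset.card_attach]
      intro x _ y _ he
      have he' : pf x.1 (hfin.mem_toFinset.mp x.2) = pf y.1 (hfin.mem_toFinset.mp y.2) := he
      by_contra hne
      have hvv : x.1 ≠ y.1 := fun h => hne (Subtype.ext h)
      exact hne_of_disj _ _ (hAA _ _ _ _ hvv) he'
    have hBcard : B.card = NetF.card := by
      rw [hB, Finset.card_image_of_injOn, Finset.card_attach]
      intro x _ y _ he
      have he' : qg x.1 (by exact (Finset.mem_filter.mp x.2).2) = qg y.1 (by exact (Finset.mem_filter.mp y.2).2) := he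
      by_contra hne
      have hvv : x.1 ≠ y.1 := fun h => hne (Subtype.ext h)
      exact hne_of_disj _ _ (hBB _ _ _ _ hvv) he'
    have hABdisj : Disjoint A B := by
      rw [Finset.disjoint_left]
      intro a haA haB
      obtain ⟨x, -, rfl⟩ := Finset.mem_image.mp haA
      obtain ⟨y, -, heq⟩ := Finset.mem_image.mp haB
      have heq' : qg y.1 (by exact (Finset.mem_filter.mp y.2).2) = pf x.1 (hfin.mem_toFinset.mp x.2) := heq
      exact hne_of_disj _ _ (hABd x.1 _ y.1 _) heq'.symm
    have hfinal := card_le_opt hQpack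
    rw [Finset.card_union_of_disjoint hP'notAB, Finset.card_union_of_disjoint hABdisj,
      hPcard', hAcard, hBcard] at hfinal
    omega
  omega
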